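/- arXiv:1606.07315 — 3 statements merged into one kernel-verified Lean document; each statement's English description precedes it below -/
import Mathlib

section
/- Let A be a rank-r, μ-incoherent m×n real matrix with SVD A = UΣV^T. Then for any n×m real matrix C, ‖A C A‖_∞ ≤ (μ² r / √(mn)) · ‖A C A‖₂, where ‖·‖_∞ is the entrywise max norm and ‖·‖₂ the operator norm. -/
open scoped BigOperators
open Matrix
open scoped RealInnerProductSpace

/-- Entrywise maximum absolute value norm of a matrix. -/
noncomputable def infNorm {m n : ℕ} (A : Matrix (Fin m) (Fin n) ℝ) : ℝ :=
  ⨆ i, ⨆ j, |A i j|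

/-- Operator (spectral) norm of a matrix. -/
noncomputable def opNorm {m n : ℕ} (A : Matrix (Fin m) (Fin n) ℝ) : ℝ :=
  ⨆ v : {v : EuclideanSpace ℝ (Fin n) // ‖v‖ ≤ 1}, ‖Matrix.toEuclideanLin A v.1‖

/-- The `i`-th largest singular value (1-indexed), via the Courant–Fischer
min-max characterization: the minimum over subspaces of dimension `n - i + 1`
of the largest value of `‖A v‖ / ‖v‖` on the subspace. -/
noncomputable def singVal {m n : ℕ} (A : Matrix (Fin m) (Fin n) ℝ) (i : ℕ) : ℝ :=
  sInf {c | ∃ V : Submodule ℝ (EuclideanSpace ℝ (Fin n)),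
    Module.finrank ℝ V = n - i + 1 ∧ ∀ v ∈ V, ‖Matrix.toEuclideanLin A v‖ ≤ c * ‖v‖}

/-- Entrywise hard thresholding at level `ζ`. -/
noncomputable def HT {m n : ℕ} (ζ : ℝ) (A : Matrix (Fin m) (Fin n) ℝ) :
    Matrix (Fin m) (Fin n) ℝ :=
  fun i j => if ζ ≤ |A i j| then A i j else 0

/-- `opNorm` really is a bound on the operator. -/
lemma opNorm_bound {m n : ℕ} (M : Matrix (Fin m) (Fin n) ℝ)
    (x : EuclideanSpace ℝ (Fin n)) :
    ‖Matrix.toEuclideanLin M x‖ ≤ opNorm M * ‖x‖ := by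
  set L := Matrix.toEuclideanLin M
  set Lc := LinearMap.toContinuousLinearMap L with hLc
  have hLcL : ∀ v : EuclideanSpace ℝ (Fin n), Lc v = L v := fun _ => rfl
  have hbdd : BddAbove (Set.range fun v : {v : EuclideanSpace ℝ (Fin n) // ‖v‖ ≤ 1} =>
      ‖L v.1‖) := by
    refine ⟨‖Lc‖, ?_⟩
    rintro a ⟨v, rfl⟩
    calc ‖L v.1‖ = ‖Lc v.1‖ := by rw [hLcL]
      _ ≤ ‖Lc‖ * ‖v.1‖ := Lc.le_opNorm v.1
      _ ≤ ‖Lc‖ * 1 := by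
          have := v.2
          have h0 : (0:ℝ) ≤ ‖Lc‖ := norm_nonneg _
          nlinarith
      _ = ‖Lc‖ := mul_one _
  have hunit : ∀ v : EuclideanSpace ℝ (Fin n), ‖v‖ ≤ 1 → ‖L v‖ ≤ opNorm M := by
    intro v hv
    exact le_ciSup hbdd (⟨v, hv⟩ : {v : EuclideanSpace ℝ (Fin n) // ‖v‖ ≤ 1})
  rcases eq_or_ne x 0 with rfl | hx
  · simp
  · have hxn : (0:ℝ) < ‖x‖ := norm_pos_iff.2 hx
    have h1 : ‖(‖x‖⁻¹ • x : EuclideanSpace ℝ (Fin n))‖ ≤ 1 := by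
      rw [norm_smul, norm_inv, norm_norm]
      rw [inv_mul_cancel₀ hxn.ne']
    have h2 := hunit _ h1
    rw [L.map_smul, norm_smul, norm_inv, norm_norm] at h2
    calc ‖L x‖ = ‖x‖ * (‖x‖⁻¹ * ‖L x‖) := by field_simp
      _ ≤ ‖x‖ * opNorm M := mul_le_mul_of_nonneg_left h2 hxn.le
      _ = opNorm M * ‖x‖ := mul_comm _ _

lemma dot_bound {m n : ℕ} (M : Matrix (Fin m) (Fin n) ℝ)
    (y : Fin m → ℝ) (x : Fin n → ℝ) :
    |y ⬝ᵥ (M *ᵥ x)| ≤ Real.sqrt (∑ k, y k ^ 2) * (opNorm M * Real.sqrt (∑ k, x k ^ 2)) := by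
  have hy' : ‖((WithLp.equiv 2 (Fin m → ℝ)).symm y : EuclideanSpace ℝ (Fin m))‖
      = Real.sqrt (∑ k, y k ^ 2) := by
    rw [EuclideanSpace.norm_eq]
    congr 1
    exact Finset.sum_congr rfl fun k _ => by
      simp [Real.norm_eq_abs, sq_abs]
  have hx' : ‖((WithLp.equiv 2 (Fin n → ℝ)).symm x : EuclideanSpace ℝ (Fin n))‖
      = Real.sqrt (∑ k, x k ^ 2) := by
    rw [EuclideanSpace.norm_eq]
    congr 1
    exact Finset.sum_congr rfl fun k _ => by
      simp [Real.norm_eq_abs, sq_abs]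
  have hinner : y ⬝ᵥ (M *ᵥ x) =
      (inner ℝ ((WithLp.equiv 2 (Fin m → ℝ)).symm y)
        (Matrix.toEuclideanLin M ((WithLp.equiv 2 (Fin n → ℝ)).symm x)) : ℝ) := by
    rw [show (inner ℝ ((WithLp.equiv 2 (Fin m → ℝ)).symm y)
          (Matrix.toEuclideanLin M ((WithLp.equiv 2 (Fin n → ℝ)).symm x)) : ℝ)
          = (M *ᵥ x) ⬝ᵥ star y from rfl]
    simp [dotProduct_comm]
  calc |y ⬝ᵥ (M *ᵥ x)|
      = |(inner ℝ ((WithLp.equiv 2 (Fin m → ℝ)).symm y)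
          (Matrix.toEuclideanLin M ((WithLp.equiv 2 (Fin n → ℝ)).symm x)) : ℝ)| := by
        rw [hinner]
    _ ≤ ‖((WithLp.equiv 2 (Fin m → ℝ)).symm y : EuclideanSpace ℝ (Fin m))‖ *
          ‖Matrix.toEuclideanLin M ((WithLp.equiv 2 (Fin n → ℝ)).symm x)‖ :=
        abs_real_inner_le_norm _ _
    _ ≤ ‖((WithLp.equiv 2 (Fin m → ℝ)).symm y : EuclideanSpace ℝ (Fin m))‖ *
          (opNorm M * ‖((WithLp.equiv 2 (Fin n → ℝ)).symm x : EuclideanSpace ℝ (Fin n))‖) :=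
        mul_le_mul_of_nonneg_left (opNorm_bound M _) (norm_nonneg _)
    _ = Real.sqrt (∑ k, y k ^ 2) * (opNorm M * Real.sqrt (∑ k, x k ^ 2)) := by
        rw [hy', hx']

/-- For a rank-`r`, `μ`-incoherent matrix `A = U Σ Vᵀ` and any `C`:
`‖A C A‖_∞ ≤ (μ² r / √(mn)) ‖A C A‖₂`. -/
theorem stmt2 {m n r : ℕ} (μ : ℝ)
    (A : Matrix (Fin m) (Fin n) ℝ) (C : Matrix (Fin n) (Fin m) ℝ)
    (U : Matrix (Fin m) (Fin r) ℝ) (σ : Fin r → ℝ) (V : Matrix (Fin n) (Fin r) ℝ)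
    (hA : A = U * Matrix.diagonal σ * Vᵀ)
    (hU : Uᵀ * U = 1) (hV : Vᵀ * V = 1) (hσ : ∀ l, 0 < σ l)
    (hUinc : ∀ i, Real.sqrt (∑ l, U i l ^ 2) ≤ μ * Real.sqrt (r / m))
    (hVinc : ∀ j, Real.sqrt (∑ l, V j l ^ 2) ≤ μ * Real.sqrt (r / n)) :
    infNorm (A * C * A) ≤ μ ^ 2 * r / Real.sqrt (m * n) * opNorm (A * C * A) := by
  set M := A * C * A with hM
  have hs0 : 0 ≤ opNorm M := Real.iSup_nonneg fun v => norm_nonneg _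
  -- the projection identity
  have hUP : U * Uᵀ * (U * Matrix.diagonal σ * Vᵀ) = U * Matrix.diagonal σ * Vᵀ := by
    calc U * Uᵀ * (U * Matrix.diagonal σ * Vᵀ)
        = U * ((Uᵀ * U) * (Matrix.diagonal σ * Vᵀ)) := by
          simp only [Matrix.mul_assoc]
      _ = U * Matrix.diagonal σ * Vᵀ := by rw [hU, Matrix.one_mul, Matrix.mul_assoc]
  have hVP : (U * Matrix.diagonal σ * Vᵀ) * (V * Vᵀ) = U * Matrix.diagonal σ * Vᵀ := by
    calc (U * Matrix.diagonal σ * Vᵀ) * (V * Vᵀ)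
        = U * Matrix.diagonal σ * ((Vᵀ * V) * Vᵀ) := by
          simp only [Matrix.mul_assoc]
      _ = U * Matrix.diagonal σ * Vᵀ := by rw [hV, Matrix.one_mul]
  have hproj : (U * Uᵀ) * M * (V * Vᵀ) = M := by
    rw [hM, hA]
    calc (U * Uᵀ) * (U * Matrix.diagonal σ * Vᵀ * C * (U * Matrix.diagonal σ * Vᵀ)) *
          (V * Vᵀ)
        = (U * Uᵀ * (U * Matrix.diagonal σ * Vᵀ)) * C *
            ((U * Matrix.diagonal σ * Vᵀ) * (V * Vᵀ)) := by
          simp only [Matrix.mul_assoc]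
      _ = U * Matrix.diagonal σ * Vᵀ * C * (U * Matrix.diagonal σ * Vᵀ) := by
          rw [hUP, hVP]
  -- Gram identities
  have hPU : (U * Uᵀ) * (U * Uᵀ) = U * Uᵀ := by
    calc (U * Uᵀ) * (U * Uᵀ) = U * ((Uᵀ * U) * Uᵀ) := by simp only [Matrix.mul_assoc]
      _ = U * Uᵀ := by rw [hU, Matrix.one_mul]
  have hPV : (V * Vᵀ) * (V * Vᵀ) = V * Vᵀ := by
    calc (V * Vᵀ) * (V * Vᵀ) = V * ((Vᵀ * V) * Vᵀ) := by simp only [Matrix.mul_assoc]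
      _ = V * Vᵀ := by rw [hV, Matrix.one_mul]
  have hUsym : ∀ a b, (U * Uᵀ) a b = (U * Uᵀ) b a := by
    intro a b
    simp only [Matrix.mul_apply, Matrix.transpose_apply]
    exact Finset.sum_congr rfl fun _ _ => mul_comm _ _
  have hVsym : ∀ a b, (V * Vᵀ) a b = (V * Vᵀ) b a := by
    intro a b
    simp only [Matrix.mul_apply, Matrix.transpose_apply]
    exact Finset.sum_congr rfl fun _ _ => mul_comm _ _
  have hygram : ∀ i : Fin m, ∑ k, ((U * Uᵀ) i k) ^ 2 = ∑ l, U i l ^ 2 := by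
    intro i
    have h1 : ∑ k, ((U * Uᵀ) i k) ^ 2 = ((U * Uᵀ) * (U * Uᵀ)) i i := by
      rw [Matrix.mul_apply]
      exact Finset.sum_congr rfl fun k _ => by rw [sq, hUsym i k]
    rw [h1, hPU, Matrix.mul_apply]
    exact Finset.sum_congr rfl fun l _ => by rw [Matrix.transpose_apply, sq]
  have hxgram : ∀ j : Fin n, ∑ k, ((V * Vᵀ) k j) ^ 2 = ∑ l, V j l ^ 2 := by
    intro j
    have h1 : ∑ k, ((V * Vᵀ) k j) ^ 2 = ((V * Vᵀ) * (V * Vᵀ)) j j := by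
      rw [Matrix.mul_apply]
      exact Finset.sum_congr rfl fun k _ => by rw [sq, hVsym j k, mul_comm]
    rw [h1, hPV, Matrix.mul_apply]
    exact Finset.sum_congr rfl fun l _ => by rw [Matrix.transpose_apply, sq]
  -- constant computation
  have hconst : Real.sqrt ((r:ℝ) / m) * Real.sqrt ((r:ℝ) / n) = (r:ℝ) / Real.sqrt ((m:ℝ) * n) := by
    rw [← Real.sqrt_mul (by positivity)]
    rw [div_mul_div_comm]
    rw [Real.sqrt_div (by positivity)]
    congr 1
    exact Real.sqrt_mul_self (by positivity)
  -- entrywise bound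
  have hentry : ∀ i j, |M i j| ≤ μ ^ 2 * r / Real.sqrt ((m:ℝ) * n) * opNorm M := by
    intro i j
    set y : Fin m → ℝ := fun k => (U * Uᵀ) i k with hy
    set x : Fin n → ℝ := fun k => (V * Vᵀ) k j with hx
    have hMij : M i j = y ⬝ᵥ (M *ᵥ x) := by
      conv_lhs => rw [← hproj, Matrix.mul_assoc]
      simp only [Matrix.mul_apply, dotProduct, Matrix.mulVec, hy, hx]
    have hyb : Real.sqrt (∑ k, y k ^ 2) ≤ μ * Real.sqrt ((r:ℝ) / m) := by
      rw [show ∑ k, y k ^ 2 = ∑ l, U i l ^ 2 from hygram i]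
      exact hUinc i
    have hxb : Real.sqrt (∑ k, x k ^ 2) ≤ μ * Real.sqrt ((r:ℝ) / n) := by
      rw [show ∑ k, x k ^ 2 = ∑ l, V j l ^ 2 from hxgram j]
      exact hVinc j
    have hy0 : (0:ℝ) ≤ Real.sqrt (∑ k, y k ^ 2) := Real.sqrt_nonneg _
    have hx0 : (0:ℝ) ≤ Real.sqrt (∑ k, x k ^ 2) := Real.sqrt_nonneg _
    have hμa : (0:ℝ) ≤ μ * Real.sqrt ((r:ℝ) / m) := le_trans hy0 hyb
    calc |M i j| = |y ⬝ᵥ (M *ᵥ x)| := by rw [hMij]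
      _ ≤ Real.sqrt (∑ k, y k ^ 2) * (opNorm M * Real.sqrt (∑ k, x k ^ 2)) :=
          dot_bound M y x
      _ ≤ (μ * Real.sqrt ((r:ℝ) / m)) * (opNorm M * (μ * Real.sqrt ((r:ℝ) / n))) := by
          apply mul_le_mul hyb (mul_le_mul_of_nonneg_left hxb hs0)
            (by positivity) hμa
      _ = μ ^ 2 * (Real.sqrt ((r:ℝ) / m) * Real.sqrt ((r:ℝ) / n)) * opNorm M := by ring
      _ = μ ^ 2 * r / Real.sqrt ((m:ℝ) * n) * opNorm M := by
          rw [hconst]; ring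
  rw [infNorm]
  refine Real.iSup_le (fun i => Real.iSup_le (fun j => ?_) (by positivity)) (by positivity)
  push_cast
  exact hentry i j
end

section
/- Let A ∈ ℝ^{n×n} be symmetric with eigenvalues |σ₁| ≥ ⋯ ≥ |σ_n|, B = A + H with ‖H‖₂ ≤ |σ_k|/4, and P_k(B) = UΛU^T the rank-k spectral truncation of B. Then P_k(B) admits the absolutely convergent expansion P_k(B) = Σ_{s,t ≥ 0} H^s (A U Λ^{−(s+t+1)} U^T A) H^t. -/
open scoped BigOperators
open Matrix

namespace Stmt15Aux

variable {N : ℕ}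

noncomputable def eqv (N : ℕ) : (Fin N → ℝ) ≃ₗ[ℝ] EuclideanSpace ℝ (Fin N) :=
  (WithLp.linearEquiv 2 ℝ (Fin N → ℝ)).symm

lemma eqv_apply (v : Fin N → ℝ) (i : Fin N) : eqv N v i = v i := rfl

lemma toEuclideanLin_eqv (M : Matrix (Fin N) (Fin N) ℝ) (v : Fin N → ℝ) :
    Matrix.toEuclideanLin M (eqv N v) = eqv N (M *ᵥ v) := rfl

noncomputable def nrm (v : Fin N → ℝ) : ℝ := ‖eqv N v‖

lemma opNorm_bddAbove (M : Matrix (Fin N) (Fin N) ℝ) :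
    BddAbove (Set.range fun v : {v : EuclideanSpace ℝ (Fin N) // ‖v‖ ≤ 1} =>
      ‖Matrix.toEuclideanLin M v.1‖) := by
  refine ⟨‖LinearMap.toContinuousLinearMap (Matrix.toEuclideanLin M)‖, ?_⟩
  rintro x ⟨v, rfl⟩
  calc ‖Matrix.toEuclideanLin M v.1‖
      = ‖LinearMap.toContinuousLinearMap (Matrix.toEuclideanLin M) v.1‖ := rfl
    _ ≤ ‖LinearMap.toContinuousLinearMap (Matrix.toEuclideanLin M)‖ * ‖v.1‖ :=
        ContinuousLinearMap.le_opNorm _ _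
    _ ≤ ‖LinearMap.toContinuousLinearMap (Matrix.toEuclideanLin M)‖ * 1 := by
        have := v.2
        gcongr
    _ = _ := mul_one _

lemma opNorm_nonneg (M : Matrix (Fin N) (Fin N) ℝ) : 0 ≤ opNorm M := by
  have h := le_ciSup (opNorm_bddAbove M) (⟨0, by simp⟩ :
    {v : EuclideanSpace ℝ (Fin N) // ‖v‖ ≤ 1})
  unfold opNorm
  simpa using h

lemma norm_toEuclideanLin_le (M : Matrix (Fin N) (Fin N) ℝ) (v : EuclideanSpace ℝ (Fin N)) :
    ‖Matrix.toEuclideanLin M v‖ ≤ opNorm M * ‖v‖ := by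
  rcases eq_or_ne v 0 with rfl | hv
  · simp
  · have hvpos : (0:ℝ) < ‖v‖ := norm_pos_iff.mpr hv
    set w : EuclideanSpace ℝ (Fin N) := ‖v‖⁻¹ • v with hw
    have hwnorm : ‖w‖ ≤ 1 := by
      rw [hw, norm_smul, norm_inv, norm_norm, inv_mul_cancel₀ hvpos.ne']
    have h1 : ‖Matrix.toEuclideanLin M w‖ ≤ opNorm M :=
      le_ciSup (opNorm_bddAbove M) (⟨w, hwnorm⟩ : {v : EuclideanSpace ℝ (Fin N) // ‖v‖ ≤ 1})
    have h2 : Matrix.toEuclideanLin M v = ‖v‖ • Matrix.toEuclideanLin M w := by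
      rw [hw, _root_.map_smul, smul_smul, mul_inv_cancel₀ hvpos.ne', one_smul]
    rw [h2, norm_smul, norm_norm, mul_comm]
    exact mul_le_mul_of_nonneg_right h1 hvpos.le

lemma nrm_mulVec_le (M : Matrix (Fin N) (Fin N) ℝ) (v : Fin N → ℝ) :
    nrm (M *ᵥ v) ≤ opNorm M * nrm v := by
  simpa [nrm, ← toEuclideanLin_eqv] using norm_toEuclideanLin_le M (eqv N v)

lemma nrm_pow_mulVec_le (M : Matrix (Fin N) (Fin N) ℝ) (m : ℕ) (v : Fin N → ℝ) :
    nrm ((M ^ m) *ᵥ v) ≤ opNorm M ^ m * nrm v := by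
  induction m with
  | zero => simp [Matrix.one_mulVec]
  | succ m ih =>
      have : (M ^ (m+1)) *ᵥ v = M *ᵥ ((M ^ m) *ᵥ v) := by
        rw [Matrix.mulVec_mulVec, ← pow_succ']
      rw [this]
      calc nrm (M *ᵥ ((M ^ m) *ᵥ v)) ≤ opNorm M * nrm ((M ^ m) *ᵥ v) := nrm_mulVec_le _ _
        _ ≤ opNorm M * (opNorm M ^ m * nrm v) := by
            have := opNorm_nonneg M; gcongr
        _ = opNorm M ^ (m+1) * nrm v := by ring


lemma mul_vecMulVec (M : Matrix (Fin N) (Fin N) ℝ) (a b : Fin N → ℝ) :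
    M * Matrix.vecMulVec a b = Matrix.vecMulVec (M *ᵥ a) b := by
  ext i j
  simp [Matrix.mul_apply, Matrix.vecMulVec_apply, Matrix.mulVec, dotProduct,
    Finset.sum_mul, mul_assoc]

lemma vecMulVec_mul (a b : Fin N → ℝ) (M : Matrix (Fin N) (Fin N) ℝ) :
    Matrix.vecMulVec a b * M = Matrix.vecMulVec a (Mᵀ *ᵥ b) := by
  ext i j
  simp only [Matrix.mul_apply, Matrix.vecMulVec_apply, Matrix.mulVec, dotProduct,
    Matrix.transpose_apply, Finset.mul_sum]
  exact Finset.sum_congr rfl fun x _ => by ring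

lemma vecMulVec_mulVec (a b v : Fin N → ℝ) :
    Matrix.vecMulVec a b *ᵥ v = (dotProduct b v) • a := by
  ext i
  simp only [Matrix.vecMulVec_apply, Matrix.mulVec, dotProduct, Pi.smul_apply,
    smul_eq_mul, Finset.sum_mul, Finset.mul_sum]
  exact Finset.sum_congr rfl fun x _ => by ring

lemma vecMulVec_smul_left (c : ℝ) (a b : Fin N → ℝ) :
    Matrix.vecMulVec (c • a) b = c • Matrix.vecMulVec a b := by
  ext i j; simp [Matrix.vecMulVec_apply, mul_assoc]

lemma vecMulVec_smul_right (c : ℝ) (a b : Fin N → ℝ) :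
    Matrix.vecMulVec a (c • b) = c • Matrix.vecMulVec a b := by
  ext i j; simp [Matrix.vecMulVec_apply]; ring

lemma vecMulVec_sub_left (a a' b : Fin N → ℝ) :
    Matrix.vecMulVec (a - a') b = Matrix.vecMulVec a b - Matrix.vecMulVec a' b := by
  ext i j; simp [Matrix.vecMulVec_apply, sub_mul]

lemma sum_mulVec {ι : Type*} (s : Finset ι) (M : ι → Matrix (Fin N) (Fin N) ℝ) (v : Fin N → ℝ) :
    (∑ i ∈ s, M i) *ᵥ v = ∑ i ∈ s, (M i *ᵥ v) := by
  ext j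
  simp only [Matrix.mulVec, dotProduct, Finset.sum_apply, Matrix.sum_apply,
    Finset.sum_mul]
  rw [Finset.sum_comm]

lemma eig (M : Matrix (Fin N) (Fin N) ℝ) (v : ℕ → Fin N → ℝ) (ev : ℕ → ℝ)
    (hM : M = ∑ j ∈ Finset.Icc 1 N, ev j • Matrix.vecMulVec (v j) (v j))
    (horth : ∀ i ∈ Finset.Icc 1 N, ∀ j ∈ Finset.Icc 1 N,
      dotProduct (v i) (v j) = if i = j then 1 else 0)
    (i : ℕ) (hi : i ∈ Finset.Icc 1 N) : M *ᵥ v i = ev i • v i := by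
  rw [hM, sum_mulVec]
  have hterm : ∀ j ∈ Finset.Icc 1 N,
      (ev j • Matrix.vecMulVec (v j) (v j)) *ᵥ v i
        = (if j = i then ev i • v i else 0) := by
    intro j hj
    rw [Matrix.smul_mulVec, vecMulVec_mulVec, horth j hj i hi]
    by_cases h : j = i
    · subst h; simp
    · simp [h]
  rw [Finset.sum_congr rfl hterm, Finset.sum_ite_eq' (Finset.Icc 1 N) i]
  simp [hi]

lemma abs_coord_le_nrm (v : Fin N → ℝ) (a : Fin N) : |v a| ≤ nrm v := by
  have h : nrm v = Real.sqrt (∑ i, (v i) ^ 2) := by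
    rw [nrm, EuclideanSpace.norm_eq]
    congr 1
    refine Finset.sum_congr rfl fun i _ => ?_
    rw [eqv_apply, Real.norm_eq_abs, sq_abs]
  rw [h, ← Real.sqrt_sq_eq_abs]
  apply Real.sqrt_le_sqrt
  exact Finset.single_le_sum (fun i _ => sq_nonneg (v i)) (Finset.mem_univ a)

lemma nrm_eq_one (v : Fin N → ℝ) (h : dotProduct v v = 1) : nrm v = 1 := by
  have h2 : nrm v ^ 2 = 1 := by
    rw [nrm, ← real_inner_self_eq_norm_sq]
    rw [PiLp.inner_apply]
    simpa [eqv_apply, dotProduct, sq] using h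
  have h0 : (0:ℝ) ≤ nrm v := norm_nonneg _
  nlinarith

lemma orth_family (v : ℕ → Fin N → ℝ)
    (horth : ∀ i ∈ Finset.Icc 1 N, ∀ j ∈ Finset.Icc 1 N,
      dotProduct (v i) (v j) = if i = j then 1 else 0)
    (S : Finset ℕ) (hS : S ⊆ Finset.Icc 1 N) :
    Orthonormal ℝ (fun j : {x // x ∈ S} => eqv N (v j)) := by
  rw [orthonormal_iff_ite]
  intro j1 j2
  have h := horth j1 (hS j1.2) j2 (hS j2.2)
  have hinner : (inner ℝ (eqv N (v j1)) (eqv N (v j2)) : ℝ)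
      = dotProduct (v (j1 : ℕ)) (v (j2 : ℕ)) := by
    rw [PiLp.inner_apply]
    simp [eqv_apply, dotProduct, RCLike.inner_apply, mul_comm]
  rw [hinner, h]
  by_cases hc : (j1 : ℕ) = (j2 : ℕ)
  · simp [hc, Subtype.ext hc]
  · have : j1 ≠ j2 := fun hh => hc (by rw [hh])
    simp [hc, this]

lemma norm_sum_sq {ι : Type*} [Fintype ι] (f : ι → EuclideanSpace ℝ (Fin N))
    (hf : Orthonormal ℝ f) (l : ι → ℝ) :
    ‖∑ j, l j • f j‖ ^ 2 = ∑ j, (l j) ^ 2 := by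
  rw [← real_inner_self_eq_norm_sq]
  rw [hf.inner_sum l l Finset.univ]
  simp [sq]


lemma norm_le_of_span (M : Matrix (Fin N) (Fin N) ℝ) (v : ℕ → Fin N → ℝ) (ev : ℕ → ℝ)
    (hM : M = ∑ j ∈ Finset.Icc 1 N, ev j • Matrix.vecMulVec (v j) (v j))
    (horth : ∀ i ∈ Finset.Icc 1 N, ∀ j ∈ Finset.Icc 1 N,
      dotProduct (v i) (v j) = if i = j then 1 else 0)
    (S : Finset ℕ) (hS : S ⊆ Finset.Icc 1 N) (b : ℝ) (hb : 0 ≤ b)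
    (hbound : ∀ j ∈ S, |ev j| ≤ b)
    (x : EuclideanSpace ℝ (Fin N))
    (hx : x ∈ Submodule.span ℝ (Set.range fun j : {y // y ∈ S} => eqv N (v j))) :
    ‖Matrix.toEuclideanLin M x‖ ≤ b * ‖x‖ := by
  obtain ⟨c, hc⟩ := Submodule.mem_span_range_iff_exists_fun ℝ |>.mp hx
  have hfam := orth_family v horth S hS
  have hMx : Matrix.toEuclideanLin M x = ∑ j : {y // y ∈ S}, (ev j * c j) • eqv N (v j) := by
    rw [← hc, map_sum]
    refine Finset.sum_congr rfl fun j _ => ?_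
    rw [_root_.map_smul, toEuclideanLin_eqv, eig M v ev hM horth j (hS j.2),
      _root_.map_smul, smul_smul, mul_comm]
  have h1 : ‖Matrix.toEuclideanLin M x‖ ^ 2 = ∑ j : {y // y ∈ S}, (ev j * c j) ^ 2 := by
    rw [hMx]; exact norm_sum_sq _ hfam _
  have h2 : ‖x‖ ^ 2 = ∑ j : {y // y ∈ S}, (c j) ^ 2 := by
    rw [← hc]; exact norm_sum_sq _ hfam _
  have h3 : ‖Matrix.toEuclideanLin M x‖ ^ 2 ≤ (b * ‖x‖) ^ 2 := by
    rw [h1, mul_pow, h2, Finset.mul_sum]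
    refine Finset.sum_le_sum fun j _ => ?_
    have hj := hbound j j.2
    have : (ev j) ^ 2 ≤ b ^ 2 := by
      rw [← sq_abs (ev ↑j)]
      exact pow_le_pow_left₀ (abs_nonneg _) hj 2
    nlinarith [sq_nonneg (c j)]
  have hbx : 0 ≤ b * ‖x‖ := mul_nonneg hb (norm_nonneg _)
  nlinarith [norm_nonneg (Matrix.toEuclideanLin M x)]

lemma norm_ge_of_span (M : Matrix (Fin N) (Fin N) ℝ) (v : ℕ → Fin N → ℝ) (ev : ℕ → ℝ)
    (hM : M = ∑ j ∈ Finset.Icc 1 N, ev j • Matrix.vecMulVec (v j) (v j))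
    (horth : ∀ i ∈ Finset.Icc 1 N, ∀ j ∈ Finset.Icc 1 N,
      dotProduct (v i) (v j) = if i = j then 1 else 0)
    (S : Finset ℕ) (hS : S ⊆ Finset.Icc 1 N) (b : ℝ)
    (hbound : ∀ j ∈ S, b ≤ |ev j|)
    (x : EuclideanSpace ℝ (Fin N)) (hb : 0 ≤ b)
    (hx : x ∈ Submodule.span ℝ (Set.range fun j : {y // y ∈ S} => eqv N (v j))) :
    b * ‖x‖ ≤ ‖Matrix.toEuclideanLin M x‖ := by
  obtain ⟨c, hc⟩ := Submodule.mem_span_range_iff_exists_fun ℝ |>.mp hx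
  have hfam := orth_family v horth S hS
  have hMx : Matrix.toEuclideanLin M x = ∑ j : {y // y ∈ S}, (ev j * c j) • eqv N (v j) := by
    rw [← hc, map_sum]
    refine Finset.sum_congr rfl fun j _ => ?_
    rw [_root_.map_smul, toEuclideanLin_eqv, eig M v ev hM horth j (hS j.2),
      _root_.map_smul, smul_smul, mul_comm]
  have h1 : ‖Matrix.toEuclideanLin M x‖ ^ 2 = ∑ j : {y // y ∈ S}, (ev j * c j) ^ 2 := by
    rw [hMx]; exact norm_sum_sq _ hfam _
  have h2 : ‖x‖ ^ 2 = ∑ j : {y // y ∈ S}, (c j) ^ 2 := by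
    rw [← hc]; exact norm_sum_sq _ hfam _
  have h3 : (b * ‖x‖) ^ 2 ≤ ‖Matrix.toEuclideanLin M x‖ ^ 2 := by
    rw [h1, mul_pow, h2, Finset.mul_sum]
    refine Finset.sum_le_sum fun j _ => ?_
    have hj := hbound j j.2
    have : b ^ 2 ≤ (ev j) ^ 2 := by
      rw [← sq_abs (ev ↑j)]
      exact pow_le_pow_left₀ hb hj 2
    nlinarith [sq_nonneg (c j)]
  have hbx : 0 ≤ b * ‖x‖ := mul_nonneg hb (norm_nonneg _)
  nlinarith [norm_nonneg (Matrix.toEuclideanLin M x)]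

lemma finrank_span_orth (v : ℕ → Fin N → ℝ)
    (horth : ∀ i ∈ Finset.Icc 1 N, ∀ j ∈ Finset.Icc 1 N,
      dotProduct (v i) (v j) = if i = j then 1 else 0)
    (S : Finset ℕ) (hS : S ⊆ Finset.Icc 1 N) :
    Module.finrank ℝ (Submodule.span ℝ
      (Set.range fun j : {y // y ∈ S} => eqv N (v j))) = S.card := by
  rw [finrank_span_eq_card (orth_family v horth S hS).linearIndependent]
  simp

lemma weyl (A H : Matrix (Fin N) (Fin N) ℝ) (k : ℕ) (hk1 : 1 ≤ k) (hk : k ≤ N)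
    (w : ℕ → Fin N → ℝ) (σ : ℕ → ℝ)
    (hAeig : A = ∑ i ∈ Finset.Icc 1 N, σ i • Matrix.vecMulVec (w i) (w i))
    (hworth : ∀ i ∈ Finset.Icc 1 N, ∀ j ∈ Finset.Icc 1 N,
      dotProduct (w i) (w j) = if i = j then 1 else 0)
    (hσord : ∀ i ∈ Finset.Icc 1 N, ∀ j ∈ Finset.Icc 1 N, i ≤ j → |σ j| ≤ |σ i|)
    (u : ℕ → Fin N → ℝ) (lam : ℕ → ℝ)
    (hBeig : A + H = ∑ i ∈ Finset.Icc 1 N, lam i • Matrix.vecMulVec (u i) (u i))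
    (huorth : ∀ i ∈ Finset.Icc 1 N, ∀ j ∈ Finset.Icc 1 N,
      dotProduct (u i) (u j) = if i = j then 1 else 0)
    (hlamord : ∀ i ∈ Finset.Icc 1 N, ∀ j ∈ Finset.Icc 1 N, i ≤ j → |lam j| ≤ |lam i|)
    (i : ℕ) (hi : i ∈ Finset.Icc 1 k) :
    |σ k| ≤ |lam i| + opNorm H := by
  obtain ⟨hi1, hik⟩ := Finset.mem_Icc.mp hi
  have hkN : k ∈ Finset.Icc 1 N := Finset.mem_Icc.mpr ⟨hk1, hk⟩
  have hiN : i ∈ Finset.Icc 1 N := Finset.mem_Icc.mpr ⟨hi1, hik.trans hk⟩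
  have hSW : Finset.Icc 1 k ⊆ Finset.Icc 1 N := Finset.Icc_subset_Icc_right hk
  have hSV : Finset.Icc i N ⊆ Finset.Icc 1 N := Finset.Icc_subset_Icc_left hi1
  set Wsp := Submodule.span ℝ
    (Set.range fun j : {y // y ∈ Finset.Icc 1 k} => eqv N (w j))
  set Vsp := Submodule.span ℝ
    (Set.range fun j : {y // y ∈ Finset.Icc i N} => eqv N (u j))
  have hrW : Module.finrank ℝ Wsp = k := by
    rw [finrank_span_orth w hworth _ hSW, Nat.card_Icc]; omega
  have hrV : Module.finrank ℝ Vsp = N + 1 - i := by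
    rw [finrank_span_orth u huorth _ hSV, Nat.card_Icc]
  have hsum := Submodule.finrank_sup_add_finrank_inf_eq Wsp Vsp
  have hle : Module.finrank ℝ ↥(Wsp ⊔ Vsp) ≤ N := by
    have := Submodule.finrank_le (Wsp ⊔ Vsp)
    rwa [finrank_euclideanSpace_fin] at this
  have hpos : 0 < Module.finrank ℝ ↥(Wsp ⊓ Vsp) := by
    rw [hrW, hrV] at hsum; omega
  obtain ⟨x, hx0⟩ := Module.finrank_pos_iff_exists_ne_zero.mp hpos
  have hxW : (x : EuclideanSpace ℝ (Fin N)) ∈ Wsp := x.2.1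
  have hxV : (x : EuclideanSpace ℝ (Fin N)) ∈ Vsp := x.2.2
  have hxne : (x : EuclideanSpace ℝ (Fin N)) ≠ 0 := fun h => hx0 (Subtype.ext h)
  have hxpos : (0:ℝ) < ‖(x : EuclideanSpace ℝ (Fin N))‖ := norm_pos_iff.mpr hxne
  have hlow : |σ k| * ‖(x : EuclideanSpace ℝ (Fin N))‖
      ≤ ‖Matrix.toEuclideanLin A (x : EuclideanSpace ℝ (Fin N))‖ := by
    refine norm_ge_of_span A w σ hAeig hworth _ hSW _ ?_ _ (abs_nonneg _) hxW
    intro j hj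
    obtain ⟨hj1, hjk⟩ := Finset.mem_Icc.mp hj
    exact hσord j (Finset.mem_Icc.mpr ⟨hj1, hjk.trans hk⟩) k hkN hjk
  have hup : ‖Matrix.toEuclideanLin (A + H) (x : EuclideanSpace ℝ (Fin N))‖
      ≤ |lam i| * ‖(x : EuclideanSpace ℝ (Fin N))‖ := by
    refine norm_le_of_span (A + H) u lam hBeig huorth _ hSV _ (abs_nonneg _) ?_ _ hxV
    intro j hj
    obtain ⟨hij, hjN⟩ := Finset.mem_Icc.mp hj
    exact hlamord i hiN j (Finset.mem_Icc.mpr ⟨hi1.trans hij, hjN⟩) hij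
  have hsplit : Matrix.toEuclideanLin A (x : EuclideanSpace ℝ (Fin N))
      = Matrix.toEuclideanLin (A + H) (x : EuclideanSpace ℝ (Fin N))
        - Matrix.toEuclideanLin H (x : EuclideanSpace ℝ (Fin N)) := by
    rw [map_add]; simp
  have hHx := norm_toEuclideanLin_le H (x : EuclideanSpace ℝ (Fin N))
  have htri : ‖Matrix.toEuclideanLin A (x : EuclideanSpace ℝ (Fin N))‖
      ≤ (|lam i| + opNorm H) * ‖(x : EuclideanSpace ℝ (Fin N))‖ := by
    rw [hsplit]
    calc ‖Matrix.toEuclideanLin (A + H) (x : EuclideanSpace ℝ (Fin N))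
          - Matrix.toEuclideanLin H (x : EuclideanSpace ℝ (Fin N))‖
        ≤ ‖Matrix.toEuclideanLin (A + H) (x : EuclideanSpace ℝ (Fin N))‖
          + ‖Matrix.toEuclideanLin H (x : EuclideanSpace ℝ (Fin N))‖ := norm_sub_le _ _
      _ ≤ |lam i| * ‖(x : EuclideanSpace ℝ (Fin N))‖
          + opNorm H * ‖(x : EuclideanSpace ℝ (Fin N))‖ := add_le_add hup hHx
      _ = _ := by ring
  have := hlow.trans htri
  exact le_of_mul_le_mul_right (by linarith) hxpos

end Stmt15Aux


set_option maxHeartbeats 1000000 in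
/-- Taylor/Neumann expansion of the rank-`k` spectral truncation: with
`‖H‖₂ ≤ |σ_k|/4` and `P_k(B) = U Λ Uᵀ` the rank-`k` truncation of `B = A + H`,
`P_k(B) = Σ_{s,t≥0} H^s (A U Λ^{−(s+t+1)} Uᵀ A) H^t`, absolutely convergent. -/
theorem stmt15 {N : ℕ} (A H : Matrix (Fin N) (Fin N) ℝ)
    (hAsymm : Aᵀ = A) (hHsymm : Hᵀ = H) (k : ℕ) (hk1 : 1 ≤ k) (hk : k ≤ N)
    (w : ℕ → Fin N → ℝ) (σ : ℕ → ℝ)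
    (hAeig : A = ∑ i ∈ Finset.Icc 1 N, σ i • Matrix.vecMulVec (w i) (w i))
    (hworth : ∀ i ∈ Finset.Icc 1 N, ∀ j ∈ Finset.Icc 1 N,
      dotProduct (w i) (w j) = if i = j then 1 else 0)
    (hσord : ∀ i ∈ Finset.Icc 1 N, ∀ j ∈ Finset.Icc 1 N, i ≤ j → |σ j| ≤ |σ i|)
    (hH : opNorm H ≤ |σ k| / 4)
    (u : ℕ → Fin N → ℝ) (lam : ℕ → ℝ)
    (hBeig : A + H = ∑ i ∈ Finset.Icc 1 N, lam i • Matrix.vecMulVec (u i) (u i))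
    (huorth : ∀ i ∈ Finset.Icc 1 N, ∀ j ∈ Finset.Icc 1 N,
      dotProduct (u i) (u j) = if i = j then 1 else 0)
    (hlamord : ∀ i ∈ Finset.Icc 1 N, ∀ j ∈ Finset.Icc 1 N, i ≤ j → |lam j| ≤ |lam i|) :
    Summable (fun st : ℕ × ℕ =>
      H ^ st.1 *
        (A * (∑ i ∈ Finset.Icc 1 k,
            (lam i ^ (st.1 + st.2 + 1))⁻¹ • Matrix.vecMulVec (u i) (u i)) * A) *
        H ^ st.2) ∧
    (∑ i ∈ Finset.Icc 1 k, lam i • Matrix.vecMulVec (u i) (u i)) =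
      ∑' st : ℕ × ℕ,
        H ^ st.1 *
          (A * (∑ i ∈ Finset.Icc 1 k,
              (lam i ^ (st.1 + st.2 + 1))⁻¹ • Matrix.vecMulVec (u i) (u i)) * A) *
          H ^ st.2 := by
  classical
  have hkN_sub : Finset.Icc 1 k ⊆ Finset.Icc 1 N := Finset.Icc_subset_Icc_right hk
  have key : ∀ i ∈ Finset.Icc 1 k, lam i ≠ 0 → opNorm H < |lam i| := by
    intro i hi hne
    have hw := Stmt15Aux.weyl A H k hk1 hk w σ hAeig hworth hσord u lam hBeig huorth
      hlamord i hi
    have h0 := Stmt15Aux.opNorm_nonneg H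
    rcases eq_or_lt_of_le h0 with h | h
    · rw [← h]; exact abs_pos.mpr hne
    · nlinarith
  have main : ∀ i ∈ Finset.Icc 1 k,
      HasSum (fun st : ℕ × ℕ =>
        (lam i ^ (st.1 + st.2 + 1))⁻¹ •
          (H ^ st.1 * (A * Matrix.vecMulVec (u i) (u i) * A) * H ^ st.2))
        (lam i • Matrix.vecMulVec (u i) (u i)) := by
    intro i hi
    by_cases hμ : lam i = 0
    · have hzero : (fun st : ℕ × ℕ =>
          (lam i ^ (st.1 + st.2 + 1))⁻¹ •
            (H ^ st.1 * (A * Matrix.vecMulVec (u i) (u i) * A) * H ^ st.2))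
          = fun _ => 0 := by
        funext st
        rw [hμ, zero_pow (by omega), _root_.inv_zero, zero_smul]
      rw [hzero, hμ, zero_smul]
      exact hasSum_zero
    · set c : Fin N → ℝ := u i with hc_def
      have hiN : i ∈ Finset.Icc 1 N := hkN_sub hi
      have hnrmc : Stmt15Aux.nrm c = 1 :=
        Stmt15Aux.nrm_eq_one _ (by simpa using huorth i hiN i hiN)
      have hBu : (A + H) *ᵥ c = lam i • c :=
        Stmt15Aux.eig (A + H) u lam hBeig huorth i hiN
      have hAu : A *ᵥ c = lam i • c - H *ᵥ c := by
        rw [Matrix.add_mulVec] at hBu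
        exact eq_sub_of_add_eq hBu
      set μ : ℝ := lam i with hμ_def
      have hμpos : 0 < |μ| := abs_pos.mpr hμ
      set α : ℝ := opNorm H / |μ| with hα_def
      have hα1 : α < 1 := (div_lt_one hμpos).mpr (key i hi hμ)
      have hα0 : 0 ≤ α := div_nonneg (Stmt15Aux.opNorm_nonneg H) hμpos.le
      set x : ℕ → Fin N → ℝ := fun m => (H ^ m) *ᵥ c with hx_def
      set y : ℕ → Fin N → ℝ := fun m => (μ⁻¹) ^ m • x m with hy_def
      set d : ℕ → Fin N → ℝ := fun m => y m - y (m + 1) with hd_def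
      have hxbound : ∀ m, Stmt15Aux.nrm (x m) ≤ opNorm H ^ m := fun m => by
        simpa [hnrmc] using Stmt15Aux.nrm_pow_mulVec_le H m c
      have hybound : ∀ m, Stmt15Aux.nrm (y m) ≤ α ^ m := by
        intro m
        have h1 : Stmt15Aux.nrm (y m) = |μ⁻¹| ^ m * Stmt15Aux.nrm (x m) := by
          rw [hy_def]
          simp only [Stmt15Aux.nrm, _root_.map_smul, norm_smul]
          rw [norm_pow, Real.norm_eq_abs]
        rw [h1, abs_inv, inv_pow, hα_def, div_pow, div_eq_mul_inv,
          mul_comm (opNorm H ^ m)]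
        exact mul_le_mul_of_nonneg_left (hxbound m) (by positivity)
      have hXd : ∀ m, (H ^ m) *ᵥ (A *ᵥ c) = μ ^ (m + 1) • d m := by
        intro m
        have hxsucc : (H ^ m) *ᵥ (H *ᵥ c) = x (m + 1) := by
          rw [hx_def, Matrix.mulVec_mulVec, ← pow_succ]
        have h1 : (H ^ m) *ᵥ (A *ᵥ c) = μ • x m - x (m + 1) := by
          rw [hAu, Matrix.mulVec_sub, Matrix.mulVec_smul, hxsucc]
        have h2 : μ ^ (m + 1) • d m = μ • x m - x (m + 1) := by
          rw [hd_def]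
          simp only [hy_def]
          rw [smul_sub, smul_smul, smul_smul]
          congr 1
          · congr 1
            rw [inv_pow, pow_succ, mul_comm (μ ^ m) μ, mul_assoc,
              mul_inv_cancel₀ (pow_ne_zero m hμ), mul_one]
          · rw [inv_pow, mul_inv_cancel₀ (pow_ne_zero (m + 1) hμ), one_smul]
        rw [h1, ← h2]
      have hterm : ∀ st : ℕ × ℕ,
          (μ ^ (st.1 + st.2 + 1))⁻¹ •
            (H ^ st.1 * (A * Matrix.vecMulVec c c * A) * H ^ st.2)
            = μ • Matrix.vecMulVec (d st.1) (d st.2) := by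
        intro st
        have hmat : H ^ st.1 * (A * Matrix.vecMulVec c c * A) * H ^ st.2
            = Matrix.vecMulVec ((H ^ st.1) *ᵥ (A *ᵥ c)) ((H ^ st.2) *ᵥ (A *ᵥ c)) := by
          rw [Stmt15Aux.mul_vecMulVec, Stmt15Aux.vecMulVec_mul, hAsymm,
            Stmt15Aux.mul_vecMulVec, Stmt15Aux.vecMulVec_mul, Matrix.transpose_pow, hHsymm]
        rw [hmat, hXd st.1, hXd st.2, Stmt15Aux.vecMulVec_smul_left,
          Stmt15Aux.vecMulVec_smul_right, smul_smul, smul_smul]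
        congr 1
        have hexp : st.1 + 1 + (st.2 + 1) = st.1 + st.2 + 1 + 1 := by omega
        rw [mul_assoc, ← pow_add, hexp, pow_succ μ (st.1 + st.2 + 1),
          inv_mul_cancel_left₀ (pow_ne_zero _ hμ)]
      have hdboundE : ∀ m, ‖Stmt15Aux.eqv N (d m)‖ ≤ α ^ m + α ^ (m + 1) := by
        intro m
        have heq : Stmt15Aux.eqv N (d m)
            = Stmt15Aux.eqv N (y m) - Stmt15Aux.eqv N (y (m + 1)) := by
          rw [hd_def]; exact map_sub _ _ _
        rw [heq]
        exact (norm_sub_le _ _).trans (add_le_add (hybound m) (hybound (m + 1)))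
      have hsummable_geom : Summable (fun m : ℕ => α ^ m + α ^ (m + 1)) := by
        have hg := summable_geometric_of_lt_one hα0 hα1
        refine hg.add ?_
        have := hg.mul_left α
        refine this.congr fun m => ?_
        rw [pow_succ, mul_comm]
      have hD : Summable (fun m => Stmt15Aux.eqv N (d m)) :=
        Summable.of_norm_bounded hsummable_geom hdboundE
      have hy0 : y 0 = c := by
        simp [hy_def, hx_def, Matrix.one_mulVec]
      have hDsum : HasSum (fun m => Stmt15Aux.eqv N (d m)) (Stmt15Aux.eqv N c) := by
        have h1 := hD.hasSum
        have h2 := h1.tendsto_sum_nat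
        have h3 : (fun n => ∑ m ∈ Finset.range n, Stmt15Aux.eqv N (d m))
            = fun n => Stmt15Aux.eqv N (y 0) - Stmt15Aux.eqv N (y n) := by
          funext n
          rw [← Finset.sum_range_sub' (fun m => Stmt15Aux.eqv N (y m)) n]
          refine Finset.sum_congr rfl fun m _ => ?_
          rw [hd_def]; exact map_sub _ _ _
        have hyn0 : Filter.Tendsto (fun n => Stmt15Aux.eqv N (y n)) Filter.atTop (nhds 0) := by
          apply squeeze_zero_norm (fun n => hybound n)
          exact tendsto_pow_atTop_nhds_zero_of_lt_one hα0 hα1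
        have h4 : Filter.Tendsto (fun n => Stmt15Aux.eqv N (y 0) - Stmt15Aux.eqv N (y n))
            Filter.atTop (nhds (Stmt15Aux.eqv N (y 0) - 0)) :=
          Filter.Tendsto.const_sub _ hyn0
        rw [h3] at h2
        have h5 := tendsto_nhds_unique h2 h4
        rw [sub_zero, hy0] at h5
        rw [← h5]
        exact h1
      have hDsumPi : HasSum d c := by
        have he := hDsum.mapL
          ((PiLp.continuousLinearEquiv 2 ℝ (fun _ : Fin N => ℝ)) :
            EuclideanSpace ℝ (Fin N) →L[ℝ] (Fin N → ℝ))
        exact he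
      have hcoord : ∀ a : Fin N, HasSum (fun m => d m a) (c a) := fun a =>
        Pi.hasSum.mp hDsumPi a
      have hnormcoord : ∀ a : Fin N, Summable (fun m => ‖d m a‖) := by
        intro a
        refine Summable.of_nonneg_of_le (fun m => norm_nonneg _) (fun m => ?_) hsummable_geom
        calc ‖d m a‖ = |d m a| := rfl
          _ ≤ Stmt15Aux.nrm (d m) := Stmt15Aux.abs_coord_le_nrm _ _
          _ ≤ α ^ m + α ^ (m + 1) := hdboundE m
      have hprod : ∀ a b : Fin N,
          HasSum (fun st : ℕ × ℕ => d st.1 a * d st.2 b) (c a * c b) := by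
        intro a b
        have hs : Summable (fun st : ℕ × ℕ => d st.1 a * d st.2 b) :=
          summable_mul_of_summable_norm (hnormcoord a) (hnormcoord b)
        have ht : (∑' st : ℕ × ℕ, d st.1 a * d st.2 b)
            = (∑' m, d m a) * (∑' m, d m b) :=
          (tsum_mul_tsum_of_summable_norm (hnormcoord a) (hnormcoord b)).symm
        have hh := hs.hasSum
        rw [ht, (hcoord a).tsum_eq, (hcoord b).tsum_eq] at hh
        exact hh
      have hmatsum : HasSum (fun st : ℕ × ℕ => Matrix.vecMulVec (d st.1) (d st.2))
          (Matrix.vecMulVec c c) := by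
        refine Pi.hasSum.mpr fun a => Pi.hasSum.mpr fun b => ?_
        simp only [Matrix.vecMulVec_apply]
        exact hprod a b
      have final := hmatsum.const_smul μ
      simp only [hterm]
      exact final
  have hF : (fun st : ℕ × ℕ =>
      H ^ st.1 *
        (A * (∑ i ∈ Finset.Icc 1 k,
            (lam i ^ (st.1 + st.2 + 1))⁻¹ • Matrix.vecMulVec (u i) (u i)) * A) *
        H ^ st.2)
      = fun st : ℕ × ℕ => ∑ i ∈ Finset.Icc 1 k,
          (lam i ^ (st.1 + st.2 + 1))⁻¹ •
            (H ^ st.1 * (A * Matrix.vecMulVec (u i) (u i) * A) * H ^ st.2) := by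
    funext st
    rw [Finset.mul_sum, Finset.sum_mul, Finset.mul_sum, Finset.sum_mul]
    refine Finset.sum_congr rfl fun i _ => ?_
    rw [mul_smul_comm, smul_mul_assoc, mul_smul_comm, smul_mul_assoc]
  have hsum : HasSum (fun st : ℕ × ℕ =>
      H ^ st.1 *
        (A * (∑ i ∈ Finset.Icc 1 k,
            (lam i ^ (st.1 + st.2 + 1))⁻¹ • Matrix.vecMulVec (u i) (u i)) * A) *
        H ^ st.2)
      (∑ i ∈ Finset.Icc 1 k, lam i • Matrix.vecMulVec (u i) (u i)) := by
    rw [hF]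
    exact hasSum_sum fun i hi => main i hi
  exact ⟨hsum.summable, hsum.tsum_eq.symm⟩
end

section
/- Suppose Ω ⊆ [m]×[n] is obtained by including each entry independently with probability p ∈ [1/(4n), 1/2] (with n ≥ m), and A ∈ ℝ^{m×n}. Then the matrix H = (√p / (2√n ‖A‖_∞)) (A − (1/p) P_Ω(A)) satisfies: E[H_{ij}] = 0, |H_{ij}| ≤ 1, and E[|H_{ij}|^k] ≤ 1/n for all 2 ≤ k ≤ 2 log n. -/
open scoped BigOperators
open Matrix

open MeasureTheory ProbabilityTheory

lemma bern_aux {Ω : Type*} [MeasureSpace Ω] [IsProbabilityMeasure (ℙ : Measure Ω)]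
    (p : ℝ) (hp : 0 ≤ p) (X : Ω → ℝ) (hm : Measurable X)
    (h01 : ∀ ω, X ω = 0 ∨ X ω = 1) (hb : ℙ {ω | X ω = 1} = ENNReal.ofReal p) :
    Integrable X ∧ ∫ ω, X ω = p := by
  have hS : MeasurableSet {ω | X ω = 1} := hm (measurableSet_singleton 1)
  have hXi : X = Set.indicator {ω | X ω = 1} (fun _ => (1:ℝ)) := by
    funext ω
    rcases h01 ω with h | h
    · rw [Set.indicator_of_notMem]
      · exact h
      · simp only [Set.mem_setOf_eq, h]; norm_num
    · rw [Set.indicator_of_mem]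
      · exact h
      · exact h
  constructor
  · rw [hXi]
    exact (integrable_const (1:ℝ)).indicator hS
  · rw [hXi, integral_indicator_const (1:ℝ) hS, measureReal_def, hb, ENNReal.toReal_ofReal hp]
    simp

lemma infNorm_nonneg_le {m n : ℕ} (A : Matrix (Fin m) (Fin n) ℝ) (i : Fin m) (j : Fin n) :
    |A i j| ≤ infNorm A := by
  have h1 : |A i j| ≤ ⨆ j', |A i j'| :=
    le_ciSup (f := fun j' => |A i j'|) (Set.Finite.bddAbove (Set.finite_range _)) j
  have h2 : (⨆ j', |A i j'|) ≤ ⨆ i', ⨆ j', |A i' j'| :=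
    le_ciSup (f := fun i' => ⨆ j', |A i' j'|) (Set.Finite.bddAbove (Set.finite_range _)) i
  exact h1.trans h2

set_option maxHeartbeats 1000000 in
/-- If `Ω` includes each entry independently with probability `p ∈ [1/(4n), 1/2]`
(`n ≥ m`), then `H = (√p/(2√n‖A‖_∞))(A − P_Ω(A)/p)` has entries with mean zero,
absolute value at most `1`, and `k`-th moments at most `1/n` for `2 ≤ k ≤ 2 log n`. -/
theorem stmt17 {m n : ℕ} (hmn : m ≤ n) (p : ℝ)
    (hp1 : 1 / (4 * (n : ℝ)) ≤ p) (hp2 : p ≤ 1 / 2)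
    {Ω : Type*} [MeasureSpace Ω] [IsProbabilityMeasure (ℙ : Measure Ω)]
    (δ : Fin m → Fin n → Ω → ℝ)
    (hmeas : ∀ i j, Measurable (δ i j))
    (h01 : ∀ i j ω, δ i j ω = 0 ∨ δ i j ω = 1)
    (hber : ∀ i j, ℙ {ω | δ i j ω = 1} = ENNReal.ofReal p)
    (hind : iIndepFun
      (fun (ij : Fin m × Fin n) ω => δ ij.1 ij.2 ω) ℙ)
    (A : Matrix (Fin m) (Fin n) ℝ)
    (H : Fin m → Fin n → Ω → ℝ)
    (hH : ∀ i j ω, H i j ω =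
      Real.sqrt p / (2 * Real.sqrt n * infNorm A) * (A i j - A i j * δ i j ω / p)) :
    (∀ i j, ∫ ω, H i j ω = 0) ∧
    (∀ i j ω, |H i j ω| ≤ 1) ∧
    (∀ i j (k : ℕ), 2 ≤ k → (k : ℝ) ≤ 2 * Real.log n →
      ∫ ω, |H i j ω| ^ k ≤ 1 / n) := by
  -- notation
  set c : ℝ := Real.sqrt p / (2 * Real.sqrt n * infNorm A) with hc
  set M : ℝ := infNorm A with hMdef
  -- general facts available once we know `Fin n` is nonempty
  have key : ∀ (j : Fin n), 0 < p ∧ 1 ≤ (n : ℝ) := by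
    intro j
    have hn : 0 < n := j.pos
    have hn1 : 1 ≤ (n : ℝ) := by exact_mod_cast Nat.one_le_iff_ne_zero.mpr hn.ne'
    refine ⟨lt_of_lt_of_le ?_ hp1, hn1⟩
    positivity
  -- the pointwise bound |H i j ω| ≤ 1 (proved first, reused in part 3)
  have habs : ∀ i j ω, |H i j ω| ≤ 1 := by
    intro i j ω
    obtain ⟨hp0, hn1⟩ := key j
    have hA : |A i j| ≤ M := infNorm_nonneg_le A i j
    have hM0 : 0 ≤ M := le_trans (abs_nonneg _) hA
    rcases eq_or_lt_of_le hM0 with hMz | hMpos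
    · -- M = 0, so A i j = 0 and H = 0
      have hAij : A i j = 0 := by
        have := hA
        rw [← hMz] at this
        exact abs_eq_zero.mp (le_antisymm this (abs_nonneg _))
      rw [hH, hAij]
      simp
    · -- main case
      rw [hH]
      have hsp : 0 ≤ Real.sqrt p := Real.sqrt_nonneg _
      have htn : 1 ≤ Real.sqrt n := by
        rw [show (1:ℝ) = Real.sqrt 1 by simp]
        exact Real.sqrt_le_sqrt hn1
      have hc0 : 0 ≤ c := by
        rw [hc]
        positivity
    -- |A i j - A i j * δ/p| ≤ M / p
      have hbound : |A i j - A i j * δ i j ω / p| ≤ M / p := by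
        rcases h01 i j ω with h | h
        · rw [h]
          simp only [mul_zero, zero_div, sub_zero]
          rw [le_div_iff₀ hp0]
          nlinarith [abs_nonneg (A i j)]
        · rw [h]
          have : A i j - A i j * 1 / p = A i j * (1 - 1/p) := by ring
          rw [this, abs_mul]
          have h1p : |1 - 1/p| = 1/p - 1 := by
            rw [abs_of_nonpos]
            · ring
            · have : 1 ≤ 1/p := by
                rw [le_div_iff₀ hp0]; linarith
              linarith
          rw [h1p]
          have h2 : 1/p - 1 ≤ 1/p := by linarith
          calc |A i j| * (1/p - 1) ≤ M * (1/p) := by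
                apply mul_le_mul hA h2 (by linarith [(le_div_iff₀ hp0).mpr (by nlinarith : (1:ℝ)*p ≤ 1)]) hM0
            _ = M / p := by ring
      rw [abs_mul, abs_of_nonneg hc0]
      have step : c * |A i j - A i j * δ i j ω / p| ≤ c * (M / p) :=
        mul_le_mul_of_nonneg_left hbound hc0
      refine step.trans ?_
      have hceq : c * (M / p) = Real.sqrt p / (2 * Real.sqrt n * p) := by
        rw [hc, hMdef]
        field_simp
        ring_nf
        exact mul_inv_cancel₀ hMpos.ne'
      rw [hceq]
      -- √p ≤ 2 √n p
      rw [div_le_one (by positivity)]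
      have hnp : (1:ℝ)/4 ≤ n * p := by
        have h4 : (0:ℝ) < 4 * n := by positivity
        rw [div_le_iff₀ h4] at hp1
        nlinarith
      have h1 : Real.sqrt p * Real.sqrt p = p := Real.mul_self_sqrt hp0.le
      have h2 : Real.sqrt n * Real.sqrt n = (n:ℝ) := Real.mul_self_sqrt (by positivity)
      have hsp' : 0 < Real.sqrt p := Real.sqrt_pos.mpr hp0
      have h3 : 1 ≤ 2 * Real.sqrt n * Real.sqrt p := by
        nlinarith [mul_nonneg (Real.sqrt_nonneg (n:ℝ)) (Real.sqrt_nonneg p)]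
      have h4 : Real.sqrt p * 1 ≤ Real.sqrt p * (2 * Real.sqrt n * Real.sqrt p) :=
        mul_le_mul_of_nonneg_left h3 hsp
      nlinarith [h4, h1]
  refine ⟨?_, habs, ?_⟩
  · -- mean zero
    intro i j
    obtain ⟨hp0, hn1⟩ := key j
    obtain ⟨hint, hEX⟩ := bern_aux p hp0.le (δ i j) (hmeas i j)
      (fun ω => h01 i j ω) (hber i j)
    have heq : (fun ω => H i j ω)
        = fun ω => c * (A i j - A i j * δ i j ω / p) := funext (hH i j)
    rw [heq]
    rw [integral_const_mul _ _]
    have hint2 : Integrable (fun ω => A i j * δ i j ω / p) := by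
      have : (fun ω => A i j * δ i j ω / p) = fun ω => (A i j / p) * δ i j ω := by
        funext ω; ring
      rw [this]
      exact hint.const_mul _
    rw [integral_sub (integrable_const _) hint2]
    have : ∫ ω, A i j * δ i j ω / p = A i j := by
      have h1 : (fun ω => A i j * δ i j ω / p) = fun ω => (A i j / p) * δ i j ω := by
        funext ω; ring
      rw [h1, integral_const_mul _ _, hEX]
      field_simp
    rw [this]
    simp
  · -- moments
    intro i j k hk2 _
    obtain ⟨hp0, hn1⟩ := key j
    have hA : |A i j| ≤ M := infNorm_nonneg_le A i j
    have hM0 : 0 ≤ M := le_trans (abs_nonneg _) hA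
    have hn0 : (0:ℝ) < n := by linarith
    rcases eq_or_lt_of_le hM0 with hMz | hMpos
    · have hAij : A i j = 0 := by
        have := hA
        rw [← hMz] at this
        exact abs_eq_zero.mp (le_antisymm this (abs_nonneg _))
      have hz : (fun ω => |H i j ω| ^ k) = fun _ => 0 := by
        funext ω
        rw [hH, hAij]
        simp
        omega
      rw [hz]
      simp
    · obtain ⟨hint, hEX⟩ := bern_aux p hp0.le (δ i j) (hmeas i j)
        (fun ω => h01 i j ω) (hber i j)
      have hHmeas : Measurable (H i j) := by
        have heq : H i j = fun ω => c * (A i j - A i j * δ i j ω / p) := funext (hH i j)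
        rw [heq]
        exact ((((hmeas i j).const_mul (A i j)).div_const p).const_sub (A i j)).const_mul c
      -- step 1: ∫ |H|^k ≤ ∫ H^2
      have hsq_int : Integrable (fun ω => H i j ω ^ 2) := by
        apply Integrable.mono' (integrable_const (1:ℝ))
          ((hHmeas.pow_const 2).aestronglyMeasurable)
        filter_upwards with ω
        rw [Real.norm_eq_abs, abs_pow]
        exact pow_le_one₀ (abs_nonneg _) (habs i j ω)
      have hmono : ∫ ω, |H i j ω| ^ k ≤ ∫ ω, H i j ω ^ 2 := by
        apply integral_mono_of_nonneg
        · filter_upwards with ω; positivity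
        · exact hsq_int
        · filter_upwards with ω
          rw [← sq_abs]
          exact pow_le_pow_of_le_one (abs_nonneg _) (habs i j ω) hk2
      refine hmono.trans ?_
      -- step 2: compute ∫ H^2
      set q : ℝ := (1 - 1/p)^2 - 1 with hq
      have hpt : (fun ω => H i j ω ^ 2)
          = fun ω => (c * A i j)^2 * (1 + q * δ i j ω) := by
        funext ω
        rw [hH]
        rcases h01 i j ω with h | h <;> rw [h, hq] <;> ring
      rw [hpt, integral_const_mul _ _]
      have : ∫ ω, (1 + q * δ i j ω) = 1 + q * p := by
        rw [integral_add (integrable_const _) (hint.const_mul q),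
          integral_const_mul _ _, hEX]
        simp
      rw [this]
      -- step 3: bound
      have hcA : (c * A i j)^2 ≤ p / (4 * n) := by
        have h1 : |c * A i j| ≤ Real.sqrt p / (2 * Real.sqrt n) := by
          rw [abs_mul, hc]
          have hc0 : 0 ≤ Real.sqrt p / (2 * Real.sqrt n * M) := by positivity
          rw [abs_of_nonneg hc0]
          have : Real.sqrt p / (2 * Real.sqrt n * M) * |A i j|
              ≤ Real.sqrt p / (2 * Real.sqrt n * M) * M :=
            mul_le_mul_of_nonneg_left hA hc0
          refine this.trans (le_of_eq ?_)
          have hM' : M ≠ 0 := hMpos.ne'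
          have hsn' : Real.sqrt n ≠ 0 := by positivity
          field_simp
        have h2 : (c * A i j)^2 ≤ (Real.sqrt p / (2 * Real.sqrt n))^2 := by
          rw [← sq_abs]
          exact pow_le_pow_left₀ (abs_nonneg _) h1 2
        refine h2.trans ?_
        rw [div_pow, Real.sq_sqrt hp0.le]
        rw [mul_pow, Real.sq_sqrt (by positivity : (0:ℝ) ≤ (n:ℝ))]
        norm_num
      have hqe : 1 + q * p = 1/p - 1 := by
        rw [hq]
        field_simp
        ring
      have hp2' : (2:ℝ) ≤ 1/p := by
        rw [le_div_iff₀ hp0]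
        linarith
      have hqp : 0 ≤ 1 + q * p ∧ 1 + q * p ≤ 1/p := by
        rw [hqe]
        constructor <;> linarith
      have hb2 : (c * A i j)^2 * (1 + q * p) ≤ (p / (4 * n)) * (1/p) :=
        mul_le_mul hcA hqp.2 hqp.1 (by positivity)
      refine hb2.trans ?_
      have hpp : p * (1/p) = 1 := by
        rw [mul_one_div, div_self hp0.ne']
      have he : p / (4 * (n:ℝ)) * (1/p) = 1 / (4 * n) := by
        rw [div_mul_eq_mul_div, hpp]
      exact he.trans_le (one_div_le_one_div_of_le hn0 (by linarith))
end
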